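/- A number ρ_0 ∈ ℂ is an eigenvalue of the boundary value problem B — i.e., there exists a not identically zero solution with jumps y of the pencil equation at ρ = ρ_0 satisfying y(0) = α y(T) and y'(0) − (iρ_0 h' + h) y(0) = β y'(T) (values at 0 and T understood as the one-sided limits y(0+0), y(T−0), etc.) — if and only if a(ρ_0) = 0, where a(ρ) = α φ(T,ρ) + β S'(T,ρ) − (1 + αβ) is the characteristic function. -/

import Mathlib

open MeasureTheory Set Filter Complex intervalIntegral
open scoped Topology

noncomputable section

/-- `y` (with derivative `y'`) solves the pencil equation
`y'' + (ρ² + ρ p x + q x) y = 0` on the open interval `(c, d)`: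
`y` is differentiable with derivative `y'` there, and `y'` is absolutely continuous
with `y'' = -(ρ² + ρ p + q) y` almost everywhere, which is encoded by the
integral equation for `y'`. -/
def PencilSolOn (p q : ℝ → ℂ) (ρ : ℂ) (y y' : ℝ → ℂ) (c d : ℝ) : Prop :=
  (∀ x ∈ Set.Ioo c d, HasDerivAt y (y' x) x) ∧
  (∀ u ∈ Set.Ioo c d, ∀ v ∈ Set.Ioo c d,
    y' v - y' u = ∫ t in u..v, -((ρ ^ 2 + ρ * p t + q t) * y t))

/-- A solution with jumps of the pencil equation on `[b 0, b N]`, together with its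
one-sided limits at the nodes `b j`.  The fields `yL j, yL' j` (resp. `yR j, yR' j`)
are the one-sided limits `y (b j - 0), y' (b j - 0)` (resp. `y (b j + 0), y' (b j + 0)`).
The values of `y, y'` at the endpoints `b 0` and `b N` are understood as the
corresponding one-sided limits, and the jump conditions hold at the interior nodes
`b 1, …, b (N-1)`. -/
structure JumpSolution (N : ℕ) (b : ℕ → ℝ) (p q : ℝ → ℂ)
    (γ η' η : ℕ → ℂ) (ρ : ℂ) where
  y : ℝ → ℂ
  y' : ℝ → ℂ
  yL : ℕ → ℂ
  yL' : ℕ → ℂ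
  yR : ℕ → ℂ
  yR' : ℕ → ℂ
  solves : ∀ j, 1 ≤ j → j ≤ N →
    PencilSolOn p q ρ y y' (b (j - 1)) (b j)
  limL : ∀ j, 1 ≤ j → j ≤ N →
    Filter.Tendsto y (nhdsWithin (b j) (Set.Iio (b j))) (nhds (yL j)) ∧
    Filter.Tendsto y' (nhdsWithin (b j) (Set.Iio (b j))) (nhds (yL' j))
  limR : ∀ j, j + 1 ≤ N →
    Filter.Tendsto y (nhdsWithin (b j) (Set.Ioi (b j))) (nhds (yR j)) ∧
    Filter.Tendsto y' (nhdsWithin (b j) (Set.Ioi (b j))) (nhds (yR' j))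
  jump : ∀ j, 1 ≤ j → j + 1 ≤ N →
    yR j = γ j * yL j ∧
    yR' j = (γ j)⁻¹ * yL' j + (Complex.I * ρ * η' j + η j) * yL j
  left_end : y (b 0) = yR 0 ∧ y' (b 0) = yR' 0
  right_end : y (b N) = yL N ∧ y' (b N) = yL' N

/-- `p` is absolutely continuous on `[a, b]`. -/
def AbsCont (p : ℝ → ℂ) (a b : ℝ) : Prop :=
  ∃ p' : ℝ → ℂ, MeasureTheory.IntegrableOn p' (Set.Icc a b) ∧
    ∀ x ∈ Set.Icc a b, p x = p a + ∫ t in a..x, p' t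

lemma my_parts (f f' h : ℝ → ℂ) (u v : ℝ) (huv : u ≤ v)
    (hf : ∀ t ∈ Icc u v, HasDerivAt f (f' t) t)
    (hf' : ContinuousOn f' (Icc u v))
    (hh : IntegrableOn h (Icc u v)) :
    ∫ t in Icc u v, f' t * (∫ s in Icc u t, h s)
      = f v * (∫ s in Icc u v, h s) - ∫ s in Icc u v, f s * h s := by
  set μ := volume.restrict (Icc u v) with hμ
  have hfc : ContinuousOn f (Icc u v) := fun t ht => (hf t ht).continuousAt.continuousWithinAt
  have hf'int : IntegrableOn f' (Icc u v) := hf'.integrableOn_Icc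
  have hSmeas : MeasurableSet {z : ℝ × ℝ | z.2 ≤ z.1} :=
    (isClosed_le continuous_snd continuous_fst).measurableSet
  have hK : Integrable
      (fun z : ℝ × ℝ => if z.2 ≤ z.1 then f' z.1 * h z.2 else 0) (μ.prod μ) := by
    have := (hf'int.mul_prod hh).indicator (μ := μ.prod μ) hSmeas
    refine this.congr (Eventually.of_forall fun z => ?_)
    simp [Set.indicator_apply]
  have swap := integral_integral_swap
      (f := fun t s => if s ≤ t then f' t * h s else 0) (μ := μ) (ν := μ) (by exact hK)
  have hL : (∫ t, ∫ s, (if s ≤ t then f' t * h s else 0) ∂μ ∂μ)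
      = ∫ t in Icc u v, f' t * (∫ s in Icc u t, h s) := by
    refine setIntegral_congr_fun measurableSet_Icc (fun t ht => ?_)
    have : (fun s => if s ≤ t then f' t * h s else 0)
        = (Iic t).indicator (fun s => f' t * h s) := by
      funext s; simp [Set.indicator_apply]
    rw [this, MeasureTheory.integral_indicator measurableSet_Iic, hμ,
      Measure.restrict_restrict measurableSet_Iic]
    have hset : Iic t ∩ Icc u v = Icc u t := by
      ext z; simp only [mem_inter_iff, mem_Iic, mem_Icc]
      exact ⟨fun hz => ⟨hz.2.1, hz.1⟩, fun hz => ⟨hz.2, hz.1, hz.2.trans ht.2⟩⟩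
    rw [hset, MeasureTheory.integral_const_mul]
  have hR : (∫ s, ∫ t, (if s ≤ t then f' t * h s else 0) ∂μ ∂μ)
      = f v * (∫ s in Icc u v, h s) - ∫ s in Icc u v, f s * h s := by
    have step : ∀ s ∈ Icc u v, (∫ t, (if s ≤ t then f' t * h s else 0) ∂μ)
        = (f v - f s) * h s := by
      intro s hs
      have : (fun t => if s ≤ t then f' t * h s else 0)
          = (Ici s).indicator (fun t => f' t * h s) := by
        funext t; simp [Set.indicator_apply]
      rw [this, MeasureTheory.integral_indicator measurableSet_Ici, hμ,
        Measure.restrict_restrict measurableSet_Ici]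
      have hset : Ici s ∩ Icc u v = Icc s v := by
        ext z; simp only [mem_inter_iff, mem_Ici, mem_Icc]
        exact ⟨fun hz => ⟨hz.1, hz.2.2⟩, fun hz => ⟨hz.1, hs.1.trans hz.1, hz.2⟩⟩
      have hftc : ∫ t in s..v, f' t = f v - f s := by
        refine integral_eq_sub_of_hasDerivAt (fun t ht => hf t ?_) ?_
        · rw [uIcc_of_le hs.2] at ht; exact ⟨hs.1.trans ht.1, ht.2⟩
        · refine (hf'.mono ?_).intervalIntegrable
          rw [uIcc_of_le hs.2]; exact fun z hz => ⟨hs.1.trans hz.1, hz.2⟩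
      rw [hset, MeasureTheory.integral_mul_const, integral_Icc_eq_integral_Ioc,
        ← integral_of_le hs.2, hftc]
    rw [setIntegral_congr_fun measurableSet_Icc step]
    have h1 : IntegrableOn (fun s => f s * h s) (Icc u v) :=
      hh.continuousOn_mul hfc isCompact_Icc
    rw [show (fun s => (f v - f s) * h s) = (fun s => f v * h s - f s * h s) by
      funext s; ring]
    rw [integral_sub (hh.const_mul (f v)) h1,
      MeasureTheory.integral_const_mul]
  rw [← hL, swap, hR]

lemma sol_cont' (r : ℝ → ℂ) (c d : ℝ) (hr : IntegrableOn r (Icc c d))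
    (y y' : ℝ → ℂ)
    (hy : ∀ x ∈ Ioo c d, HasDerivAt y (y' x) x)
    (hy' : ∀ u ∈ Ioo c d, ∀ v ∈ Ioo c d, y' v - y' u = ∫ t in u..v, r t * y t) :
    ContinuousOn y' (Ioo c d) := by
  intro v₁ hv₁
  apply ContinuousAt.continuousWithinAt
  obtain ⟨a', ha'⟩ := exists_between hv₁.1
  obtain ⟨b', hb'⟩ := exists_between hv₁.2
  have hab : a' ≤ b' := le_of_lt (ha'.2.trans hb'.1)
  have hsub : Icc a' b' ⊆ Ioo c d := fun z hz =>
    ⟨ha'.1.trans_le hz.1, lt_of_le_of_lt hz.2 hb'.2⟩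
  have hyc : ContinuousOn y (Icc a' b') := fun t ht =>
    (hy t (hsub ht)).continuousAt.continuousWithinAt
  have hint : IntegrableOn (fun t => r t * y t) (Icc a' b') :=
    (hr.mono_set (hsub.trans Ioo_subset_Icc_self)).mul_continuousOn hyc isCompact_Icc
  have hprim : ContinuousOn (fun w => y' a' + ∫ t in a'..w, r t * y t) (Icc a' b') := by
    refine continuousOn_const.add ?_
    have := intervalIntegral.continuousOn_primitive_interval
      (a := a') (b := b') (f := fun t => r t * y t) (μ := volume) ?_
    · rwa [uIcc_of_le hab] at this
    · rwa [uIcc_of_le hab]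
  have hca : ContinuousAt (fun w => y' a' + ∫ t in a'..w, r t * y t) v₁ :=
    hprim.continuousAt (Icc_mem_nhds ha'.2 hb'.1)
  refine hca.congr ?_
  have hmem : Ioo a' b' ∈ 𝓝 v₁ := Ioo_mem_nhds ha'.2 hb'.1
  refine Filter.eventuallyEq_of_mem hmem (fun w hw => ?_)
  have hw' : w ∈ Ioo c d := hsub (Ioo_subset_Icc_self hw)
  have ha'' : a' ∈ Ioo c d := ⟨ha'.1, ha'.2.trans hv₁.2⟩
  have := hy' a' ha'' w hw'
  linear_combination -this

lemma sol_ftc (r : ℝ → ℂ) (c d : ℝ) (hr : IntegrableOn r (Icc c d))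
    (y y' : ℝ → ℂ)
    (hy : ∀ x ∈ Ioo c d, HasDerivAt y (y' x) x)
    (hy' : ∀ u ∈ Ioo c d, ∀ v ∈ Ioo c d, y' v - y' u = ∫ t in u..v, r t * y t) :
    ∀ u ∈ Ioo c d, ∀ v ∈ Ioo c d, y v - y u = ∫ t in u..v, y' t := by
  intro u hu v hv
  have hsub : uIcc u v ⊆ Ioo c d := by
    rw [uIcc]
    exact Icc_subset_Ioo (lt_min hu.1 hv.1) (max_lt hu.2 hv.2)
  refine (intervalIntegral.integral_eq_sub_of_hasDerivAt (fun t ht => hy t (hsub ht)) ?_).symm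
  exact ((sol_cont' r c d hr y y' hy hy').mono hsub).intervalIntegrable

lemma vanish (r : ℝ → ℂ) (c d : ℝ) (hr : IntegrableOn r (Icc c d))
    (y y' : ℝ → ℂ)
    (hy : ∀ x ∈ Ioo c d, HasDerivAt y (y' x) x)
    (hy' : ∀ u ∈ Ioo c d, ∀ v ∈ Ioo c d, y' v - y' u = ∫ t in u..v, r t * y t)
    (h0 : Tendsto y (𝓝[>] c) (𝓝 0)) (h0' : Tendsto y' (𝓝[>] c) (𝓝 0)) :
    ∀ x ∈ Ioo c d, y x = 0 ∧ y' x = 0 := by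
  intro e he
  set F : ℝ → ℝ := fun t => ‖y t‖ + ‖y' t‖ with hFdef
  set g : ℝ → ℝ := fun t => 1 + ‖r t‖ with hgdef
  have hFnn : ∀ t, 0 ≤ F t := fun t => add_nonneg (norm_nonneg _) (norm_nonneg _)
  have hgnn : ∀ t, 0 ≤ g t := fun t => add_nonneg zero_le_one (norm_nonneg _)
  have hIocIoo : Ioc c e ⊆ Ioo c d := fun t ht => ⟨ht.1, lt_of_le_of_lt ht.2 he.2⟩
  have hyc : ContinuousOn y (Ioo c d) := fun t ht =>
    (hy t ht).continuousAt.continuousWithinAt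
  have hy'c : ContinuousOn y' (Ioo c d) := sol_cont' r c d hr y y' hy hy'
  have hFc : ContinuousOn F (Ioo c d) := hyc.norm.add hy'c.norm
  have hFlim : Tendsto F (𝓝[>] c) (𝓝 0) := by
    have := (h0.norm.add h0'.norm)
    simpa using this
  -- global bound M₀ for F on Ioc c e
  obtain ⟨u₀, hu₀, hu₀sub⟩ :
      ∃ u₀ ∈ Ioi c, Ioc c u₀ ⊆ {t | F t < 1} := by
    rw [← mem_nhdsGT_iff_exists_Ioc_subset]
    exact hFlim (Iio_mem_nhds one_pos)
  set t₁ : ℝ := min u₀ e with ht₁def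
  have ht₁c : c < t₁ := lt_min hu₀ he.1
  have ht₁e : t₁ ≤ e := min_le_right _ _
  obtain ⟨C, hC⟩ := IsCompact.exists_bound_of_continuousOn isCompact_Icc
    (hFc.mono (fun z hz => ⟨ht₁c.trans_le hz.1, lt_of_le_of_lt hz.2 he.2⟩) :
      ContinuousOn F (Icc t₁ e))
  set M₀ : ℝ := max C 1 with hM₀def
  have hM₀nn : (0:ℝ) ≤ M₀ := zero_le_one.trans (le_max_right C 1)
  have hM : ∀ t ∈ Ioc c e, F t ≤ M₀ := by
    intro t ht
    rcases le_or_gt t t₁ with h | h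
    · have : F t < 1 := hu₀sub ⟨ht.1, h.trans (min_le_left _ _)⟩
      exact this.le.trans (le_max_right C 1)
    · have := hC t ⟨h.le, ht.2⟩
      calc F t ≤ ‖F t‖ := le_abs_self _
        _ ≤ C := this
        _ ≤ M₀ := le_max_left _ _
  -- integrability
  have hge : IntegrableOn g (Ioc c e) := by
    refine ((integrableOn_const_iff).mpr (Or.inr measure_Ioc_lt_top)).add ?_
    exact (hr.mono_set (fun t ht => Ioo_subset_Icc_self (hIocIoo ht))).norm
  have hFmeas : AEStronglyMeasurable F (volume.restrict (Ioc c e)) :=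
    (hFc.mono hIocIoo).aestronglyMeasurable measurableSet_Ioc
  have hgF : IntegrableOn (fun t => g t * F t) (Ioc c e) := by
    refine Integrable.mono' (hge.const_mul M₀) (hge.aestronglyMeasurable.mul hFmeas) ?_
    rw [ae_restrict_iff' measurableSet_Ioc]
    refine Eventually.of_forall (fun t ht => ?_)
    rw [Real.norm_eq_abs, _root_.abs_of_nonneg (mul_nonneg (hgnn t) (hFnn t)), mul_comm M₀ (g t)]
    exact mul_le_mul_of_nonneg_left (hM t ht) (hgnn t)
  -- key inequality
  have key : ∀ u ∈ Ioc c e, ∀ v ∈ Ioc c e, u ≤ v →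
      F v ≤ F u + ∫ t in Ioc u v, g t * F t := by
    intro u hu v hv huv
    have hu' : u ∈ Ioo c d := hIocIoo hu
    have hv' : v ∈ Ioo c d := hIocIoo hv
    have hIcc : Icc u v ⊆ Ioo c d := fun z hz =>
      ⟨hu'.1.trans_le hz.1, lt_of_le_of_lt hz.2 hv'.2⟩
    have h1 : ‖y v‖ ≤ ‖y u‖ + ∫ t in Ioc u v, ‖y' t‖ := by
      have := sol_ftc r c d hr y y' hy hy' u hu' v hv'
      have hnorm : ‖∫ t in u..v, y' t‖ ≤ ∫ t in Ioc u v, ‖y' t‖ := by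
        have := intervalIntegral.norm_integral_le_integral_norm_uIoc
          (f := y') (a := u) (b := v) (μ := volume)
        rwa [uIoc_of_le huv] at this
      have hyv : y v = y u + ∫ t in u..v, y' t := by linear_combination this
      calc ‖y v‖ = ‖y u + ∫ t in u..v, y' t‖ := by rw [hyv]
        _ ≤ ‖y u‖ + ‖∫ t in u..v, y' t‖ := norm_add_le _ _
        _ ≤ ‖y u‖ + ∫ t in Ioc u v, ‖y' t‖ := by linarith
    have h2 : ‖y' v‖ ≤ ‖y' u‖ + ∫ t in Ioc u v, ‖r t * y t‖ := by
      have := hy' u hu' v hv'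
      have hnorm : ‖∫ t in u..v, r t * y t‖ ≤ ∫ t in Ioc u v, ‖r t * y t‖ := by
        have := intervalIntegral.norm_integral_le_integral_norm_uIoc
          (f := fun t => r t * y t) (a := u) (b := v) (μ := volume)
        rwa [uIoc_of_le huv] at this
      have hyv : y' v = y' u + ∫ t in u..v, r t * y t := by linear_combination this
      calc ‖y' v‖ = ‖y' u + ∫ t in u..v, r t * y t‖ := by rw [hyv]
        _ ≤ ‖y' u‖ + ‖∫ t in u..v, r t * y t‖ := norm_add_le _ _
        _ ≤ ‖y' u‖ + ∫ t in Ioc u v, ‖r t * y t‖ := by linarith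
    have hi1 : IntegrableOn (fun t => ‖y' t‖) (Ioc u v) :=
      (((hy'c.mono hIcc).norm).integrableOn_Icc).mono_set Ioc_subset_Icc_self
    have hi2 : IntegrableOn (fun t => ‖r t * y t‖) (Ioc u v) := by
      have hr' : IntegrableOn r (Icc u v) := hr.mono_set (hIcc.trans Ioo_subset_Icc_self)
      have h2 : IntegrableOn (fun t => ‖r t * y t‖) (Icc u v) :=
        (hr'.mul_continuousOn (hyc.mono hIcc) isCompact_Icc).norm
      exact h2.mono_set Ioc_subset_Icc_self
    have hsum : (∫ t in Ioc u v, ‖y' t‖) + (∫ t in Ioc u v, ‖r t * y t‖)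
        ≤ ∫ t in Ioc u v, g t * F t := by
      rw [← integral_add hi1 hi2]
      refine setIntegral_mono_on (hi1.add hi2) (hgF.mono_set (fun z hz =>
        ⟨hu.1.trans hz.1, hz.2.trans hv.2⟩)) measurableSet_Ioc (fun t _ => ?_)
      have hnm : ‖r t * y t‖ = ‖r t‖ * ‖y t‖ := norm_mul _ _
      rw [hnm]
      have h1 := norm_nonneg (y t); have h2 := norm_nonneg (y' t)
      have h3 := norm_nonneg (r t)
      simp only [hFdef, hgdef]
      nlinarith
    calc F v = ‖y v‖ + ‖y' v‖ := rfl
      _ ≤ (‖y u‖ + ∫ t in Ioc u v, ‖y' t‖) + (‖y' u‖ + ∫ t in Ioc u v, ‖r t * y t‖) := by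
          linarith
      _ ≤ F u + ∫ t in Ioc u v, g t * F t := by
          have := hsum; simp only [hFdef]; linarith
  -- improper inequality
  have key0 : ∀ v ∈ Ioc c e, F v ≤ ∫ t in Ioc c v, g t * F t := by
    intro v hv
    have hK : IntegrableOn (fun t => g t * F t) (Ioc c v) :=
      hgF.mono_set (fun z hz => ⟨hz.1, hz.2.trans hv.2⟩)
    have hnn : (0:ℝ → ℝ) ≤ᵐ[volume.restrict (Ioc c v)] (fun t => g t * F t) :=
      Eventually.of_forall (fun t => mul_nonneg (hgnn t) (hFnn t))
    have hev : ∀ᶠ u in 𝓝[>] c, F v ≤ F u + ∫ t in Ioc c v, g t * F t := by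
      filter_upwards [Ioc_mem_nhdsGT hv.1] with u hu
      have huv : u ≤ v := hu.2
      have := key u ⟨hu.1, hu.2.trans hv.2⟩ v hv huv
      refine this.trans (add_le_add_right ?_ _)
      exact setIntegral_mono_set hK hnn
        (HasSubset.Subset.eventuallyLE (fun z hz => ⟨hu.1.trans hz.1, hz.2⟩))
    have hten : Tendsto (fun u => F u + ∫ t in Ioc c v, g t * F t) (𝓝[>] c)
        (𝓝 (0 + ∫ t in Ioc c v, g t * F t)) := hFlim.add tendsto_const_nhds
    have := ge_of_tendsto hten hev
    simpa using this
  -- sSup propagation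
  set A : Set ℝ := {w ∈ Icc c e | ∀ t ∈ Ioc c w, F t = 0} with hAdef
  have hcA : c ∈ A := ⟨⟨le_refl c, he.1.le⟩, fun t ht => absurd ht (by simp)⟩
  have hbddA : BddAbove A := ⟨e, fun w hw => hw.1.2⟩
  have hAne : A.Nonempty := ⟨c, hcA⟩
  set s : ℝ := sSup A with hsdef
  have hsc : c ≤ s := le_csSup hbddA hcA
  have hse : s ≤ e := csSup_le hAne (fun w hw => hw.1.2)
  have hzero_lt : ∀ t ∈ Ioo c s, F t = 0 := by
    intro t ht
    obtain ⟨a, haA, hta⟩ := exists_lt_of_lt_csSup hAne ht.2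
    exact haA.2 t ⟨ht.1, hta.le⟩
  have hsA : s ∈ A := by
    refine ⟨⟨hsc, hse⟩, fun t ht => ?_⟩
    rcases lt_or_eq_of_le ht.2 with h | h
    · exact hzero_lt t ⟨ht.1, h⟩
    · subst h
      have h1 := key0 s ⟨ht.1, hse⟩
      have h2 : ∫ x in Ioc c s, g x * F x = 0 := by
        rw [MeasureTheory.integral_Ioc_eq_integral_Ioo]
        have hcong : ∫ x in Ioo c s, g x * F x = ∫ x in Ioo c s, (0:ℝ) :=
          setIntegral_congr_fun measurableSet_Ioo
            (fun z hz => by rw [hzero_lt z hz, mul_zero])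
        rw [hcong]; simp
      rw [h2] at h1
      exact le_antisymm h1 (hFnn s)
  have hseq : s = e := by
    by_contra hne
    have hslt : s < e := lt_of_le_of_ne hse hne
    have hgeI : IntegrableOn g (Icc c e) := by
      refine ((integrableOn_const_iff).mpr (Or.inr measure_Icc_lt_top)).add ?_
      exact (hr.mono_set (Icc_subset_Icc le_rfl he.2.le)).norm
    have hgprim : ContinuousOn (fun w => ∫ t in Ioc c w, g t) (Icc c e) :=
      intervalIntegral.continuousOn_primitive hgeI
    set P : ℝ → ℝ := fun w => ∫ t in Ioc c w, g t with hPdef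
    have hten : Tendsto P (𝓝[Ioc s e] s) (𝓝 (P s)) :=
      (hgprim s ⟨hsc, hse⟩).mono_left
        (nhdsWithin_mono s (fun z hz => ⟨hsc.trans hz.1.le, hz.2⟩))
    have hev : ∀ᶠ w in 𝓝[Ioc s e] s, P w - P s < 1/2 := by
      have h2 : Tendsto (fun w => P w - P s) (𝓝[Ioc s e] s) (𝓝 0) := by
        simpa using hten.sub_const (P s)
      have := h2 (Iio_mem_nhds (by norm_num : (0:ℝ) < 1/2))
      filter_upwards [this] with w hw using hw
    have hNB : (𝓝[Ioc s e] s).NeBot := by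
      rw [nhdsWithin_Ioc_eq_nhdsGT hslt]; infer_instance
    obtain ⟨w, hw, hwmem⟩ := (hev.and eventually_mem_nhdsWithin).exists
    obtain ⟨hsw, hwe⟩ := hwmem
    set M : ℝ := sSup (F '' Ioc s w) with hMdef
    have himg_ne : (F '' Ioc s w).Nonempty := ⟨F w, ⟨w, ⟨hsw, le_rfl⟩, rfl⟩⟩
    have himg_bdd : BddAbove (F '' Ioc s w) := by
      refine ⟨M₀, ?_⟩; rintro _ ⟨z, hz, rfl⟩
      exact hM z ⟨hsc.trans_lt hz.1, hz.2.trans hwe⟩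
    have hMnn : 0 ≤ M := (hFnn w).trans (le_csSup himg_bdd ⟨w, ⟨hsw, le_rfl⟩, rfl⟩)
    have hFleM : ∀ z ∈ Ioc s w, F z ≤ M := fun z hz => le_csSup himg_bdd ⟨z, hz, rfl⟩
    have hsplit : ∀ v ∈ Ioc s w, F v ≤ ∫ t in Ioc s v, g t * F t := by
      intro v hv
      have hvIoc : v ∈ Ioc c e := ⟨hsc.trans_lt hv.1, hv.2.trans hwe⟩
      have h1 := key0 v hvIoc
      have hunion : Ioc c v = Ioc c s ∪ Ioc s v :=
        (Ioc_union_Ioc_eq_Ioc hsc hv.1.le).symm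
      have hint1 : IntegrableOn (fun t => g t * F t) (Ioc c s) :=
        hgF.mono_set (Ioc_subset_Ioc le_rfl hse)
      have hint2 : IntegrableOn (fun t => g t * F t) (Ioc s v) :=
        hgF.mono_set (Ioc_subset_Ioc hsc (hv.2.trans hwe))
      rw [hunion, setIntegral_union (Ioc_disjoint_Ioc_of_le le_rfl) measurableSet_Ioc hint1 hint2] at h1
      have hz1 : ∫ t in Ioc c s, g t * F t = 0 := by
        have hcong : ∫ t in Ioc c s, g t * F t = ∫ t in Ioc c s, (0:ℝ) :=
          setIntegral_congr_fun measurableSet_Ioc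
            (fun z hz => by rw [hsA.2 z hz, mul_zero])
        rw [hcong]; simp
      rw [hz1, zero_add] at h1
      exact h1
    have hle : ∀ v ∈ Ioc s w, F v ≤ M * (1/2) := by
      intro v hv
      have h1 := hsplit v hv
      have hgint_sv : IntegrableOn g (Ioc s v) :=
        hge.mono_set (Ioc_subset_Ioc hsc (hv.2.trans hwe))
      have hgint_sw : IntegrableOn g (Ioc s w) :=
        hge.mono_set (Ioc_subset_Ioc hsc hwe)
      have h2 : ∫ t in Ioc s v, g t * F t ≤ ∫ t in Ioc s v, g t * M := by
        refine setIntegral_mono_on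
          (hgF.mono_set (Ioc_subset_Ioc hsc (hv.2.trans hwe)))
          (hgint_sv.mul_const M) measurableSet_Ioc (fun t ht => ?_)
        exact mul_le_mul_of_nonneg_left (hFleM t ⟨ht.1, ht.2.trans hv.2⟩) (hgnn t)
      have h3 : ∫ t in Ioc s v, g t * M = (∫ t in Ioc s v, g t) * M := by
        rw [MeasureTheory.integral_mul_const]
      have h4 : ∫ t in Ioc s v, g t ≤ ∫ t in Ioc s w, g t := by
        refine setIntegral_mono_set hgint_sw
          (Eventually.of_forall (fun t => hgnn t)) ?_
        exact HasSubset.Subset.eventuallyLE (Ioc_subset_Ioc le_rfl hv.2)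
      have h5 : ∫ t in Ioc s w, g t = P w - P s := by
        have hunion : Ioc c w = Ioc c s ∪ Ioc s w :=
          (Ioc_union_Ioc_eq_Ioc hsc hsw.le).symm
        have hi1 : IntegrableOn g (Ioc c s) := hge.mono_set (Ioc_subset_Ioc le_rfl hse)
        simp only [hPdef]
        rw [hunion, setIntegral_union (Ioc_disjoint_Ioc_of_le le_rfl) measurableSet_Ioc hi1 hgint_sw]
        ring
      have h6 : ∫ t in Ioc s w, g t < 1/2 := by rw [h5]; exact hw
      have h7 : (∫ t in Ioc s v, g t) * M ≤ (1/2) * M := by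
        have hnn : 0 ≤ ∫ t in Ioc s v, g t :=
          setIntegral_nonneg measurableSet_Ioc (fun t _ => hgnn t)
        nlinarith
      calc F v ≤ ∫ t in Ioc s v, g t * F t := h1
        _ ≤ ∫ t in Ioc s v, g t * M := h2
        _ = (∫ t in Ioc s v, g t) * M := h3
        _ ≤ (1/2) * M := h7
        _ = M * (1/2) := by ring
    have hM2 : M ≤ M * (1/2) := by
      refine csSup_le himg_ne ?_
      rintro _ ⟨z, hz, rfl⟩
      exact hle z hz
    have hM0 : M ≤ 0 := by linarith
    have hFzero : ∀ v ∈ Ioc s w, F v = 0 := fun v hv =>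
      le_antisymm ((hFleM v hv).trans hM0) (hFnn v)
    have hwA : w ∈ A := by
      refine ⟨⟨hsc.trans hsw.le, hwe⟩, fun t ht => ?_⟩
      rcases le_or_gt t s with h | h
      · exact hsA.2 t ⟨ht.1, h⟩
      · exact hFzero t ⟨h, ht.2⟩
    exact absurd (le_csSup hbddA hwA) (not_le.mpr hsw)
  have hFe : F e = 0 := by
    rw [hseq] at hsA
    exact hsA.2 e ⟨he.1, le_rfl⟩
  have h1 := norm_nonneg (y e); have h2 := norm_nonneg (y' e)
  simp only [hFdef] at hFe
  constructor
  · exact norm_eq_zero.mp (by linarith)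
  · exact norm_eq_zero.mp (by linarith)

lemma wronskian_const (r : ℝ → ℂ) (c d : ℝ) (hr : IntegrableOn r (Icc c d))
    (y1 y1' y2 y2' : ℝ → ℂ)
    (hy1 : ∀ x ∈ Ioo c d, HasDerivAt y1 (y1' x) x)
    (hy1' : ∀ u ∈ Ioo c d, ∀ v ∈ Ioo c d, y1' v - y1' u = ∫ t in u..v, r t * y1 t)
    (hy2 : ∀ x ∈ Ioo c d, HasDerivAt y2 (y2' x) x)
    (hy2' : ∀ u ∈ Ioo c d, ∀ v ∈ Ioo c d, y2' v - y2' u = ∫ t in u..v, r t * y2 t) :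
    ∀ u ∈ Ioo c d, ∀ v ∈ Ioo c d,
      y1 v * y2' v - y2 v * y1' v = y1 u * y2' u - y2 u * y1' u := by
  suffices H : ∀ u ∈ Ioo c d, ∀ v ∈ Ioo c d, u ≤ v →
      y1 v * y2' v - y2 v * y1' v = y1 u * y2' u - y2 u * y1' u by
    intro u hu v hv
    rcases le_total u v with huv | huv
    · exact H u hu v hv huv
    · exact (H v hv u hu huv).symm
  intro u hu v hv huv
  have hIcc : Icc u v ⊆ Ioo c d := fun z hz => ⟨hu.1.trans_le hz.1, lt_of_le_of_lt hz.2 hv.2⟩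
  have hvmem : v ∈ Icc u v := ⟨huv, le_rfl⟩
  have hc1 : ContinuousOn y1 (Icc u v) := fun t ht =>
    (hy1 t (hIcc ht)).continuousAt.continuousWithinAt
  have hc2 : ContinuousOn y2 (Icc u v) := fun t ht =>
    (hy2 t (hIcc ht)).continuousAt.continuousWithinAt
  have hc1' : ContinuousOn y1' (Icc u v) := (sol_cont' r c d hr y1 y1' hy1 hy1').mono hIcc
  have hc2' : ContinuousOn y2' (Icc u v) := (sol_cont' r c d hr y2 y2' hy2 hy2').mono hIcc
  have hrI : IntegrableOn r (Icc u v) := hr.mono_set (hIcc.trans Ioo_subset_Icc_self)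
  have hint1 : IntegrableOn (fun t => r t * y1 t) (Icc u v) :=
    hrI.mul_continuousOn hc1 isCompact_Icc
  have hint2 : IntegrableOn (fun t => r t * y2 t) (Icc u v) :=
    hrI.mul_continuousOn hc2 isCompact_Icc
  have key : ∀ (z z' : ℝ → ℂ),
      (∀ u' ∈ Ioo c d, ∀ v' ∈ Ioo c d, z' v' - z' u' = ∫ t in u'..v', r t * z t) →
      ∀ t ∈ Icc u v, (∫ s in Icc u t, r s * z s) = z' t - z' u := by
    intro z z' hz t ht
    rw [integral_Icc_eq_integral_Ioc, ← intervalIntegral.integral_of_le ht.1,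
      ← hz u hu t (hIcc ht)]
  have key1 := key y1 y1' hy1'
  have key2 := key y2 y2' hy2'
  have ftc1 : y1 v - y1 u = ∫ t in Icc u v, y1' t := by
    rw [integral_Icc_eq_integral_Ioc, ← intervalIntegral.integral_of_le huv]
    exact sol_ftc r c d hr y1 y1' hy1 hy1' u hu v hv
  have ftc2 : y2 v - y2 u = ∫ t in Icc u v, y2' t := by
    rw [integral_Icc_eq_integral_Ioc, ← intervalIntegral.integral_of_le huv]
    exact sol_ftc r c d hr y2 y2' hy2 hy2' u hu v hv
  have e1 : ∫ t in Icc u v, y1' t * (y2' t - y2' u)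
      = y1 v * (y2' v - y2' u) - ∫ s in Icc u v, y1 s * (r s * y2 s) := by
    have hcong : ∫ t in Icc u v, y1' t * (y2' t - y2' u)
        = ∫ t in Icc u v, y1' t * (∫ s in Icc u t, r s * y2 s) :=
      setIntegral_congr_fun measurableSet_Icc (fun t ht => by rw [key2 t ht])
    rw [hcong, my_parts y1 y1' (fun s => r s * y2 s) u v huv
      (fun t ht => hy1 t (hIcc ht)) hc1' hint2, key2 v hvmem]
  have e2 : ∫ t in Icc u v, y2' t * (y1' t - y1' u)
      = y2 v * (y1' v - y1' u) - ∫ s in Icc u v, y2 s * (r s * y1 s) := by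
    have hcong : ∫ t in Icc u v, y2' t * (y1' t - y1' u)
        = ∫ t in Icc u v, y2' t * (∫ s in Icc u t, r s * y1 s) :=
      setIntegral_congr_fun measurableSet_Icc (fun t ht => by rw [key1 t ht])
    rw [hcong, my_parts y2 y2' (fun s => r s * y1 s) u v huv
      (fun t ht => hy2 t (hIcc ht)) hc2' hint1, key1 v hvmem]
  have e5 : (∫ t in Icc u v, y1' t * (y2' t - y2' u))
      - (∫ t in Icc u v, y2' t * (y1' t - y1' u))
      = y1' u * (y2 v - y2 u) - y2' u * (y1 v - y1 u) := by
    have i1 : IntegrableOn (fun t => y1' t * (y2' t - y2' u)) (Icc u v) :=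
      (hc1'.mul (hc2'.sub continuousOn_const)).integrableOn_Icc
    have i2 : IntegrableOn (fun t => y2' t * (y1' t - y1' u)) (Icc u v) :=
      (hc2'.mul (hc1'.sub continuousOn_const)).integrableOn_Icc
    rw [← integral_sub i1 i2]
    have hcong : ∫ t in Icc u v, (y1' t * (y2' t - y2' u) - y2' t * (y1' t - y1' u))
        = ∫ t in Icc u v, (y1' u * y1' t - y1' u * y1' t
            + (y1' u * y2' t - y2' u * y1' t)) := by
      refine setIntegral_congr_fun measurableSet_Icc (fun t _ => ?_)
      ring
    rw [hcong]
    have i3 : IntegrableOn (fun t => y1' u * y2' t) (Icc u v) :=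
      (continuousOn_const.mul hc2').integrableOn_Icc
    have i4 : IntegrableOn (fun t => y2' u * y1' t) (Icc u v) :=
      (continuousOn_const.mul hc1').integrableOn_Icc
    have hz : ∫ t in Icc u v, (y1' u * y1' t - y1' u * y1' t
        + (y1' u * y2' t - y2' u * y1' t)) = ∫ t in Icc u v, (y1' u * y2' t - y2' u * y1' t) := by
      refine setIntegral_congr_fun measurableSet_Icc (fun t _ => ?_)
      ring
    rw [hz, integral_sub i3 i4, MeasureTheory.integral_const_mul,
      MeasureTheory.integral_const_mul, ← ftc1, ← ftc2]
  have e6 : ∫ s in Icc u v, y1 s * (r s * y2 s) = ∫ s in Icc u v, y2 s * (r s * y1 s) := by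
    refine setIntegral_congr_fun measurableSet_Icc (fun t _ => ?_)
    ring
  linear_combination e2 - e1 + e5 + e6

/-- coefficient function -/
def rr (p q : ℝ → ℂ) (ρ : ℂ) : ℝ → ℂ := fun t => -(ρ ^ 2 + ρ * p t + q t)

section Struct
variable {T : ℝ} {N : ℕ} {b : ℕ → ℝ} {p q : ℝ → ℂ} {γ η' η : ℕ → ℂ} {ρ₀ : ℂ}

lemma pencil_spec {y y' : ℝ → ℂ} {c d : ℝ} (h : PencilSolOn p q ρ₀ y y' c d) :
    (∀ x ∈ Ioo c d, HasDerivAt y (y' x) x) ∧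
    (∀ u ∈ Ioo c d, ∀ v ∈ Ioo c d, y' v - y' u = ∫ t in u..v, rr p q ρ₀ t * y t) := by
  refine ⟨h.1, fun u hu v hv => ?_⟩
  rw [h.2 u hu v hv]
  refine intervalIntegral.integral_congr (fun t _ => ?_)
  simp only [rr]; ring

lemma rr_int (hT : (0:ℝ) ≤ T) (hp : AbsCont p 0 T)
    (hq : IntegrableOn q (Icc 0 T)) (ρ : ℂ) :
    IntegrableOn (rr p q ρ) (Icc 0 T) := by
  obtain ⟨p', hp'i, hpeq⟩ := hp
  have hpc : ContinuousOn p (Icc 0 T) := by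
    have h1 : ContinuousOn (fun x => p 0 + ∫ t in (0:ℝ)..x, p' t) (Icc 0 T) := by
      refine continuousOn_const.add ?_
      have h2 := intervalIntegral.continuousOn_primitive_interval
        (a := (0:ℝ)) (b := T) (f := p') (μ := volume) (by rwa [uIcc_of_le hT])
      rwa [uIcc_of_le hT] at h2
    exact h1.congr hpeq
  have hpint : IntegrableOn p (Icc 0 T) := hpc.integrableOn_Icc
  have h3 : IntegrableOn (fun t => ρ ^ 2 + ρ * p t + q t) (Icc 0 T) :=
    (((integrableOn_const_iff).mpr (Or.inr measure_Icc_lt_top)).add (hpint.const_mul ρ)).add hq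
  exact h3.neg

lemma b_mono (hb : ∀ j, j < N → b j < b (j + 1)) :
    ∀ i j, i ≤ j → j ≤ N → b i ≤ b j := by
  intro i j hij hjN
  induction j with
  | zero => simp_all
  | succ n ih =>
    rcases Nat.lt_succ_iff_lt_or_eq.mp (Nat.lt_succ_of_le hij) with h | h
    · exact (ih (Nat.lt_succ_iff.mp h) (by omega)).trans (hb n (by omega)).le
    · rw [h]

lemma sub_Icc (hb0 : b 0 = 0) (hbN : b N = T) (hb : ∀ j, j < N → b j < b (j + 1))
    {j : ℕ} (h1 : 1 ≤ j) (h2 : j ≤ N) : Icc (b (j - 1)) (b j) ⊆ Icc 0 T := by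
  intro z hz
  constructor
  · rw [← hb0]; exact (b_mono hb 0 (j-1) (by omega) (by omega)).trans hz.1
  · rw [← hbN]; exact hz.2.trans (b_mono hb j N h2 le_rfl)

lemma rr_int_sub (hb0 : b 0 = 0) (hbN : b N = T) (hb : ∀ j, j < N → b j < b (j + 1))
    (hrr : IntegrableOn (rr p q ρ₀) (Icc 0 T))
    {j : ℕ} (h1 : 1 ≤ j) (h2 : j ≤ N) :
    IntegrableOn (rr p q ρ₀) (Icc (b (j - 1)) (b j)) :=
  hrr.mono_set (sub_Icc hb0 hbN hb h1 h2)

lemma bcd (hb : ∀ j, j < N → b j < b (j + 1)) {j : ℕ} (h1 : 1 ≤ j) (h2 : j ≤ N) :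
    b (j - 1) < b j := by
  have := hb (j - 1) (by omega)
  rwa [show j - 1 + 1 = j by omega] at this

/-- linear combination of three jump solutions -/
def comb3 (hb0 : b 0 = 0) (hbN : b N = T) (hb : ∀ j, j < N → b j < b (j + 1))
    (hrr : IntegrableOn (rr p q ρ₀) (Icc 0 T))
    (A B C : ℂ) (J1 J2 J3 : JumpSolution N b p q γ η' η ρ₀) :
    JumpSolution N b p q γ η' η ρ₀ where
  y := fun x => A * J1.y x + B * J2.y x + C * J3.y x
  y' := fun x => A * J1.y' x + B * J2.y' x + C * J3.y' x
  yL := fun j => A * J1.yL j + B * J2.yL j + C * J3.yL j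
  yL' := fun j => A * J1.yL' j + B * J2.yL' j + C * J3.yL' j
  yR := fun j => A * J1.yR j + B * J2.yR j + C * J3.yR j
  yR' := fun j => A * J1.yR' j + B * J2.yR' j + C * J3.yR' j
  solves := by
    intro j h1 h2
    have s1 := J1.solves j h1 h2
    have s2 := J2.solves j h1 h2
    have s3 := J3.solves j h1 h2
    constructor
    · intro x hx
      exact (((s1.1 x hx).const_mul A).add ((s2.1 x hx).const_mul B)).add
        ((s3.1 x hx).const_mul C)
    · intro u hu v hv
      have hri := rr_int_sub hb0 hbN hb hrr h1 h2
      have hsubI : uIcc u v ⊆ Ioo (b (j-1)) (b j) := by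
        rw [uIcc]
        exact Icc_subset_Ioo (lt_min hu.1 hv.1) (max_lt hu.2 hv.2)
      have hint : ∀ (J : JumpSolution N b p q γ η' η ρ₀),
          (∀ x ∈ Ioo (b (j-1)) (b j), HasDerivAt J.y (J.y' x) x) →
          IntervalIntegrable (fun t => rr p q ρ₀ t * J.y t) volume u v := by
        intro J hJ
        have hc : ContinuousOn J.y (uIcc u v) := fun t ht =>
          (hJ t (hsubI ht)).continuousAt.continuousWithinAt
        have := (hri.mono_set (hsubI.trans Ioo_subset_Icc_self)).mul_continuousOn
          (hc.mono (by rfl)) isCompact_uIcc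
        exact this.intervalIntegrable
      have i1 := hint J1 s1.1
      have i2 := hint J2 s2.1
      have i3 := hint J3 s3.1
      have e1 := (pencil_spec s1).2 u hu v hv
      have e2 := (pencil_spec s2).2 u hu v hv
      have e3 := (pencil_spec s3).2 u hu v hv
      have lin : (∫ t in u..v, -((ρ₀ ^ 2 + ρ₀ * p t + q t) *
            (A * J1.y t + B * J2.y t + C * J3.y t)))
          = A * (∫ t in u..v, rr p q ρ₀ t * J1.y t)
            + B * (∫ t in u..v, rr p q ρ₀ t * J2.y t)
            + C * (∫ t in u..v, rr p q ρ₀ t * J3.y t) := by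
        rw [← intervalIntegral.integral_const_mul, ← intervalIntegral.integral_const_mul,
          ← intervalIntegral.integral_const_mul,
          ← intervalIntegral.integral_add (i1.const_mul A) (i2.const_mul B),
          ← intervalIntegral.integral_add ((i1.const_mul A).add (i2.const_mul B))
            (i3.const_mul C)]
        refine intervalIntegral.integral_congr (fun t _ => ?_)
        simp only [rr]; ring
      rw [lin]
      linear_combination A * e1 + B * e2 + C * e3
  limL := by
    intro j h1 h2
    exact ⟨((((J1.limL j h1 h2).1.const_mul A).add
        ((J2.limL j h1 h2).1.const_mul B)).add ((J3.limL j h1 h2).1.const_mul C)),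
      ((((J1.limL j h1 h2).2.const_mul A).add
        ((J2.limL j h1 h2).2.const_mul B)).add ((J3.limL j h1 h2).2.const_mul C))⟩
  limR := by
    intro j h2
    exact ⟨((((J1.limR j h2).1.const_mul A).add
        ((J2.limR j h2).1.const_mul B)).add ((J3.limR j h2).1.const_mul C)),
      ((((J1.limR j h2).2.const_mul A).add
        ((J2.limR j h2).2.const_mul B)).add ((J3.limR j h2).2.const_mul C))⟩
  jump := by
    intro j h1 h2
    have j1 := J1.jump j h1 h2
    have j2 := J2.jump j h1 h2
    have j3 := J3.jump j h1 h2
    constructor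
    · rw [j1.1, j2.1, j3.1]; ring
    · rw [j1.2, j2.2, j3.2]; ring
  left_end := by
    constructor
    · rw [J1.left_end.1, J2.left_end.1, J3.left_end.1]
    · rw [J1.left_end.2, J2.left_end.2, J3.left_end.2]
  right_end := by
    constructor
    · rw [J1.right_end.1, J2.right_end.1, J3.right_end.1]
    · rw [J1.right_end.2, J2.right_end.2, J3.right_end.2]

lemma interval_zero (hb0 : b 0 = 0) (hbN : b N = T) (hb : ∀ j, j < N → b j < b (j + 1))
    (hrr : IntegrableOn (rr p q ρ₀) (Icc 0 T))
    (Z : JumpSolution N b p q γ η' η ρ₀)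
    {j : ℕ} (h1 : 1 ≤ j) (h2 : j ≤ N)
    (hR : Z.yR (j - 1) = 0) (hR' : Z.yR' (j - 1) = 0) :
    (∀ x ∈ Ioo (b (j - 1)) (b j), Z.y x = 0 ∧ Z.y' x = 0) ∧
      Z.yL j = 0 ∧ Z.yL' j = 0 := by
  have hcd : b (j - 1) < b j := bcd hb h1 h2
  have hlim := Z.limR (j - 1) (by omega)
  have hps := pencil_spec (Z.solves j h1 h2)
  have hvan := vanish (rr p q ρ₀) (b (j - 1)) (b j)
    (rr_int_sub hb0 hbN hb hrr h1 h2) Z.y Z.y' hps.1 hps.2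
    (hR ▸ hlim.1) (hR' ▸ hlim.2)
  refine ⟨hvan, ?_, ?_⟩
  · have hmem : Ioo (b (j - 1)) (b j) ∈ 𝓝[<] (b j) :=
      Ioo_mem_nhdsLT_of_mem ⟨hcd, le_rfl⟩
    have hEq : Z.y =ᶠ[𝓝[<] (b j)] (fun _ => 0) :=
      eventuallyEq_of_mem hmem (fun x hx => (hvan x hx).1)
    have h0 : Tendsto Z.y (𝓝[<] (b j)) (𝓝 0) :=
      Tendsto.congr' hEq.symm tendsto_const_nhds
    exact tendsto_nhds_unique ((Z.limL j h1 h2).1) h0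
  · have hmem : Ioo (b (j - 1)) (b j) ∈ 𝓝[<] (b j) :=
      Ioo_mem_nhdsLT_of_mem ⟨hcd, le_rfl⟩
    have hEq : Z.y' =ᶠ[𝓝[<] (b j)] (fun _ => 0) :=
      eventuallyEq_of_mem hmem (fun x hx => (hvan x hx).2)
    have h0 : Tendsto Z.y' (𝓝[<] (b j)) (𝓝 0) :=
      Tendsto.congr' hEq.symm tendsto_const_nhds
    exact tendsto_nhds_unique ((Z.limL j h1 h2).2) h0

lemma prop_zero (hN : 1 ≤ N) (hb0 : b 0 = 0) (hbN : b N = T)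
    (hb : ∀ j, j < N → b j < b (j + 1))
    (hrr : IntegrableOn (rr p q ρ₀) (Icc 0 T))
    (Z : JumpSolution N b p q γ η' η ρ₀)
    (h0 : Z.yR 0 = 0) (h0' : Z.yR' 0 = 0) :
    (∀ j, 1 ≤ j → j ≤ N → ∀ x ∈ Ioo (b (j - 1)) (b j), Z.y x = 0) ∧
      Z.yL N = 0 ∧ Z.yL' N = 0 := by
  have hRzero : ∀ j, j + 1 ≤ N → Z.yR j = 0 ∧ Z.yR' j = 0 := by
    intro j
    induction j with
    | zero => intro _; exact ⟨h0, h0'⟩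
    | succ n ih =>
      intro hn
      have hprev := ih (by omega)
      have hstep := interval_zero hb0 hbN hb hrr Z (j := n + 1) (by omega) (by omega)
        (by simpa using hprev.1) (by simpa using hprev.2)
      have hj := Z.jump (n + 1) (by omega) hn
      rw [hstep.2.1] at hj
      rw [hstep.2.2] at hj
      exact ⟨by rw [hj.1]; ring, by rw [hj.2]; ring⟩
  have hRfact : ∀ j, 1 ≤ j → j ≤ N → Z.yR (j - 1) = 0 ∧ Z.yR' (j - 1) = 0 := by
    intro j hj1 hj2
    exact hRzero (j - 1) (by omega)
  constructor
  · intro j h1 h2 x hx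
    exact ((interval_zero hb0 hbN hb hrr Z h1 h2 (hRfact j h1 h2).1
      (hRfact j h1 h2).2).1 x hx).1
  · exact (interval_zero hb0 hbN hb hrr Z hN le_rfl (hRfact N hN le_rfl).1
      (hRfact N hN le_rfl).2).2

lemma interval_w (hb0 : b 0 = 0) (hbN : b N = T) (hb : ∀ j, j < N → b j < b (j + 1))
    (hrr : IntegrableOn (rr p q ρ₀) (Icc 0 T))
    (SS CC : JumpSolution N b p q γ η' η ρ₀)
    {j : ℕ} (h1 : 1 ≤ j) (h2 : j ≤ N) :
    CC.yL j * SS.yL' j - SS.yL j * CC.yL' j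
      = CC.yR (j - 1) * SS.yR' (j - 1) - SS.yR (j - 1) * CC.yR' (j - 1) := by
  have hcd : b (j - 1) < b j := bcd hb h1 h2
  have hpsS := pencil_spec (SS.solves j h1 h2)
  have hpsC := pencil_spec (CC.solves j h1 h2)
  have hW := wronskian_const (rr p q ρ₀) (b (j - 1)) (b j)
    (rr_int_sub hb0 hbN hb hrr h1 h2) CC.y CC.y' SS.y SS.y'
    hpsC.1 hpsC.2 hpsS.1 hpsS.2
  set m : ℝ := (b (j - 1) + b j) / 2 with hm
  have hmI : m ∈ Ioo (b (j - 1)) (b j) := ⟨by simp only [hm]; linarith, by simp only [hm]; linarith⟩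
  set W : ℝ → ℂ := fun x => CC.y x * SS.y' x - SS.y x * CC.y' x with hWdef
  have hconst : ∀ x ∈ Ioo (b (j - 1)) (b j), W x = W m := fun x hx => hW m hmI x hx
  -- left limit at b j
  have hLmem : Ioo (b (j - 1)) (b j) ∈ 𝓝[<] (b j) := Ioo_mem_nhdsLT_of_mem ⟨hcd, le_rfl⟩
  have hLlim : Tendsto W (𝓝[<] (b j)) (𝓝 (CC.yL j * SS.yL' j - SS.yL j * CC.yL' j)) :=
    (((CC.limL j h1 h2).1.mul (SS.limL j h1 h2).2).sub
      ((SS.limL j h1 h2).1.mul (CC.limL j h1 h2).2))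
  have hLconst : Tendsto W (𝓝[<] (b j)) (𝓝 (W m)) :=
    Tendsto.congr' (eventuallyEq_of_mem hLmem (fun x hx => hconst x hx)).symm
      tendsto_const_nhds
  have hL : CC.yL j * SS.yL' j - SS.yL j * CC.yL' j = W m :=
    tendsto_nhds_unique hLlim hLconst
  -- right limit at b (j-1)
  have hRmem : Ioo (b (j - 1)) (b j) ∈ 𝓝[>] (b (j - 1)) :=
    Ioo_mem_nhdsGT_of_mem ⟨le_rfl, hcd⟩
  have hRlim : Tendsto W (𝓝[>] (b (j - 1)))
      (𝓝 (CC.yR (j-1) * SS.yR' (j-1) - SS.yR (j-1) * CC.yR' (j-1))) :=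
    (((CC.limR (j-1) (by omega)).1.mul (SS.limR (j-1) (by omega)).2).sub
      ((SS.limR (j-1) (by omega)).1.mul (CC.limR (j-1) (by omega)).2))
  have hRconst : Tendsto W (𝓝[>] (b (j - 1))) (𝓝 (W m)) :=
    Tendsto.congr' (eventuallyEq_of_mem hRmem (fun x hx => hconst x hx)).symm
      tendsto_const_nhds
  have hR : CC.yR (j-1) * SS.yR' (j-1) - SS.yR (j-1) * CC.yR' (j-1) = W m :=
    tendsto_nhds_unique hRlim hRconst
  rw [hL, hR]

lemma wronsk_N (hN : 1 ≤ N) (hb0 : b 0 = 0) (hbN : b N = T)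
    (hb : ∀ j, j < N → b j < b (j + 1))
    (hγ : ∀ j, 1 ≤ j → j + 1 ≤ N → γ j ≠ 0)
    (hrr : IntegrableOn (rr p q ρ₀) (Icc 0 T))
    (SS CC : JumpSolution N b p q γ η' η ρ₀)
    (hS : SS.yR 0 = 0 ∧ SS.yR' 0 = 1) (hC : CC.yR 0 = 1 ∧ CC.yR' 0 = 0) :
    CC.yL N * SS.yL' N - SS.yL N * CC.yL' N = 1 := by
  have hWR : ∀ j, j + 1 ≤ N → CC.yR j * SS.yR' j - SS.yR j * CC.yR' j = 1 := by
    intro j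
    induction j with
    | zero => intro _; rw [hS.1, hS.2, hC.1, hC.2]; ring
    | succ n ih =>
      intro hn
      have hprev := ih (by omega)
      have hstepW := interval_w hb0 hbN hb hrr SS CC (j := n + 1) (by omega) (by omega)
      rw [show n + 1 - 1 = n by omega] at hstepW
      have hWL : CC.yL (n+1) * SS.yL' (n+1) - SS.yL (n+1) * CC.yL' (n+1) = 1 := by
        rw [hstepW]; exact hprev
      have hjS := SS.jump (n + 1) (by omega) hn
      have hjC := CC.jump (n + 1) (by omega) hn
      have hγn : γ (n + 1) ≠ 0 := hγ (n + 1) (by omega) hn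
      have hinv : γ (n+1) * (γ (n+1))⁻¹ = 1 := mul_inv_cancel₀ (hγ (n + 1) (by omega) hn)
      rw [hjS.1, hjS.2, hjC.1, hjC.2]
      linear_combination (γ (n+1) * (γ (n+1))⁻¹) * hWL + hinv
  have hstepW := interval_w hb0 hbN hb hrr SS CC (j := N) hN le_rfl
  rw [hstepW]
  exact hWR (N - 1) (by omega)

lemma find_interval (hb : ∀ j, j < N → b j < b (j + 1)) (x : ℝ)
    (hx : x ∈ Icc (b 0) (b N)) (hne : ∀ j, j ≤ N → x ≠ b j) :
    ∃ j, 1 ≤ j ∧ j ≤ N ∧ x ∈ Ioo (b (j - 1)) (b j) := by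
  classical
  have hex : ∃ j, x < b j := ⟨N, lt_of_le_of_ne hx.2 (hne N le_rfl)⟩
  set j := Nat.find hex with hjdef
  have hj : x < b j := Nat.find_spec hex
  have hj1 : 1 ≤ j := by
    by_contra h
    have hj0 : j = 0 := by omega
    rw [hj0] at hj
    exact absurd hx.1 (not_le.mpr hj)
  have hjN : j ≤ N := Nat.find_min' hex (lt_of_le_of_ne hx.2 (hne N le_rfl))
  have hlow : b (j - 1) ≤ x := by
    by_contra hlt
    push_neg at hlt
    exact Nat.find_min hex (show j - 1 < j by omega) hlt
  have hstrict : b (j - 1) < x :=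
    lt_of_le_of_ne hlow (fun h => hne (j - 1) (by omega) h.symm)
  exact ⟨j, hj1, hjN, hstrict, hj⟩

end Struct

/-- `ρ₀ ∈ ℂ` is an eigenvalue of the boundary value problem `B`
(there is a nontrivial solution with jumps at `ρ₀` satisfying the quasi-periodic
boundary conditions `y(0) = α y(T)` and `y'(0) - (iρ₀h' + h) y(0) = β y'(T)`,
values at `0` and `T` being the one-sided limits) if and only if `a(ρ₀) = 0`, where
`a(ρ) = α φ(T,ρ) + β S'(T,ρ) - (1 + αβ)` and `φ = C + (iρh' + h) S`. -/
theorem eigenvalue_iff_characteristic_function_vanishes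
    (T : ℝ) (N : ℕ) (b : ℕ → ℝ) (p q : ℝ → ℂ) (γ η' η : ℕ → ℂ)
    (hT : 0 < T) (hN : 1 ≤ N) (hb0 : b 0 = 0) (hbN : b N = T)
    (hb : ∀ j, j < N → b j < b (j + 1))
    (hγ : ∀ j, 1 ≤ j → j + 1 ≤ N → γ j ≠ 0)
    (hp : AbsCont p 0 T) (hq : MeasureTheory.IntegrableOn q (Set.Icc 0 T))
    (α β h' h : ℂ) (hαβ : α * β ≠ 0)
    (ρ₀ : ℂ)
    (SS CC : JumpSolution N b p q γ η' η ρ₀)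
    (hS : SS.yR 0 = 0 ∧ SS.yR' 0 = 1)
    (hC : CC.yR 0 = 1 ∧ CC.yR' 0 = 0) :
    (∃ Y : JumpSolution N b p q γ η' η ρ₀,
      (∃ x ∈ Set.Icc (0 : ℝ) T, (∀ j, 1 ≤ j → j + 1 ≤ N → x ≠ b j) ∧ Y.y x ≠ 0) ∧
      Y.yR 0 = α * Y.yL N ∧
      Y.yR' 0 - (Complex.I * ρ₀ * h' + h) * Y.yR 0 = β * Y.yL' N) ↔
    α * (CC.yL N + (Complex.I * ρ₀ * h' + h) * SS.yL N) + β * SS.yL' N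
      - (1 + α * β) = 0 := by
  have hrr : IntegrableOn (rr p q ρ₀) (Icc 0 T) := rr_int hT.le hp hq ρ₀
  set k : ℂ := Complex.I * ρ₀ * h' + h with hkdef
  set CL : ℂ := CC.yL N
  set CL' : ℂ := CC.yL' N
  set SL : ℂ := SS.yL N
  set SL' : ℂ := SS.yL' N
  have hW : CL * SL' - SL * CL' = 1 := wronsk_N hN hb0 hbN hb hγ hrr SS CC hS hC
  have hb01 : b 0 < b 1 := hb 0 (by omega)
  constructor
  · -- eigenvalue → a = 0
    rintro ⟨Y, ⟨x, hxIcc, hxne, hxY⟩, hbc1, hbc2⟩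
    set A : ℂ := Y.yR 0 with hAdef
    set B : ℂ := Y.yR' 0 with hBdef
    set Z : JumpSolution N b p q γ η' η ρ₀ :=
      comb3 hb0 hbN hb hrr 1 (-A) (-B) Y CC SS with hZdef
    have hZR : Z.yR 0 = 0 := by
      simp only [hZdef, comb3]
      rw [hC.1, hS.1]; ring
    have hZR' : Z.yR' 0 = 0 := by
      simp only [hZdef, comb3]
      rw [hC.2, hS.2]; ring
    have hprop := prop_zero hN hb0 hbN hb hrr Z hZR hZR'
    have hZL : Z.yL N = 0 := hprop.2.1
    have hZL' : Z.yL' N = 0 := hprop.2.2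
    have hYLN : Y.yL N = A * CL + B * SL := by
      have : (1:ℂ) * Y.yL N + (-A) * CC.yL N + (-B) * SS.yL N = 0 := hZL
      linear_combination this
    have hYLN' : Y.yL' N = A * CL' + B * SL' := by
      have : (1:ℂ) * Y.yL' N + (-A) * CC.yL' N + (-B) * SS.yL' N = 0 := hZL'
      linear_combination this
    have hrow1 : (1 - α * CL) * A - α * SL * B = 0 := by
      have := hbc1; rw [hYLN] at this
      linear_combination this
    have hrow2 : -(k + β * CL') * A + (1 - β * SL') * B = 0 := by
      have := hbc2; rw [hYLN'] at this
      linear_combination this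
    have hAB : A ≠ 0 ∨ B ≠ 0 := by
      by_contra hc
      push_neg at hc
      obtain ⟨hA0, hB0⟩ := hc
      have hYx : Y.y x = 0 := by
        by_cases hx0 : x = b 0
        · rw [hx0, Y.left_end.1, ← hAdef, hA0]
        · by_cases hxN : x = b N
          · rw [hxN, Y.right_end.1, hYLN, hA0, hB0]; ring
          · have hne : ∀ j, j ≤ N → x ≠ b j := by
              intro j hj
              rcases Nat.eq_zero_or_pos j with h0 | h1
              · rw [h0]; exact hx0
              · rcases eq_or_lt_of_le hj with hjN | hjN
                · rw [hjN]; exact hxN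
                · exact hxne j h1 (by omega)
            have hxIcc' : x ∈ Icc (b 0) (b N) := by
              rw [hb0, hbN]; exact hxIcc
            obtain ⟨j, hj1, hj2, hjx⟩ := find_interval hb x hxIcc' hne
            have hZx : Z.y x = 0 := hprop.1 j hj1 hj2 x hjx
            have : (1:ℂ) * Y.y x + (-A) * CC.y x + (-B) * SS.y x = 0 := hZx
            rw [hA0, hB0] at this
            linear_combination this
      exact hxY hYx
    have hdet : (1 - α * CL) * (1 - β * SL') - α * SL * (k + β * CL') = 0 := by
      rcases hAB with hA | hB
      · have hdA : ((1 - α * CL) * (1 - β * SL') - α * SL * (k + β * CL')) * A = 0 := by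
          linear_combination (1 - β * SL') * hrow1 + (α * SL) * hrow2
        exact (mul_eq_zero.mp hdA).resolve_right hA
      · have hdB : ((1 - α * CL) * (1 - β * SL') - α * SL * (k + β * CL')) * B = 0 := by
          linear_combination (k + β * CL') * hrow1 + (1 - α * CL) * hrow2
        exact (mul_eq_zero.mp hdB).resolve_right hB
    linear_combination -hdet + α * β * hW
  · -- a = 0 → eigenvalue
    intro ha
    obtain ⟨A, B, hAB0, hrow1, hrow2⟩ :
        ∃ A B : ℂ, (A ≠ 0 ∨ B ≠ 0) ∧ (1 - α * CL) * A - α * SL * B = 0 ∧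
          -(k + β * CL') * A + (1 - β * SL') * B = 0 := by
      by_cases h2 : (1 - β * SL') = 0 ∧ (k + β * CL') = 0
      · by_cases h1 : (1 - α * CL) = 0 ∧ α * SL = 0
        · exact ⟨1, 0, Or.inl one_ne_zero, by linear_combination h1.1,
            by rw [h2.1, h2.2]; ring⟩
        · refine ⟨α * SL, 1 - α * CL, ?_, by ring, by rw [h2.1, h2.2]; ring⟩
          by_contra hc; push_neg at hc; exact h1 ⟨hc.2, hc.1⟩
      · refine ⟨1 - β * SL', k + β * CL', ?_, ?_, by ring⟩
        · by_contra hc; push_neg at hc; exact h2 ⟨hc.1, hc.2⟩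
        · linear_combination -ha + α * β * hW
    set Y : JumpSolution N b p q γ η' η ρ₀ :=
      comb3 hb0 hbN hb hrr A B 0 CC SS SS with hYdef
    have hYR0 : Y.yR 0 = A := by
      simp only [hYdef, comb3]; rw [hC.1, hS.1]; ring
    have hYR0' : Y.yR' 0 = B := by
      simp only [hYdef, comb3]; rw [hC.2, hS.2]; ring
    have hYLN : Y.yL N = A * CL + B * SL := by
      simp only [hYdef, comb3]; ring
    have hYLN' : Y.yL' N = A * CL' + B * SL' := by
      simp only [hYdef, comb3]; ring
    refine ⟨Y, ?_, ?_, ?_⟩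
    · -- nontriviality witness
      by_contra hw0
      push_neg at hw0
      have hyzero : ∀ x ∈ Ioo (b 0) (b 1), Y.y x = 0 := by
        intro x hx
        have hx0T : x ∈ Icc (0:ℝ) T := by
          constructor
          · rw [← hb0]; exact hx.1.le
          · rw [← hbN]; exact (hx.2.trans_le (b_mono hb 1 N hN le_rfl)).le
        refine hw0 x hx0T ?_
        intro j hj1 hj2
        have : x < b j := hx.2.trans_le (b_mono hb 1 j hj1 (by omega))
        exact this.ne
      have hy'zero : ∀ x ∈ Ioo (b 0) (b 1), Y.y' x = 0 := by
        intro x hx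
        have hsolv := (Y.solves 1 le_rfl hN).1
        rw [show (1:ℕ) - 1 = 0 by rfl] at hsolv
        have h1 := hsolv x hx
        have h2 : HasDerivAt Y.y 0 x := by
          refine (hasDerivAt_const x (0:ℂ)).congr_of_eventuallyEq ?_
          exact eventuallyEq_of_mem (Ioo_mem_nhds hx.1 hx.2) (fun z hz => hyzero z hz)
        exact h1.unique h2
      have hmemR : Ioo (b 0) (b 1) ∈ 𝓝[>] (b 0) := Ioo_mem_nhdsGT_of_mem ⟨le_rfl, hb01⟩
      have hA0 : A = 0 := by
        rw [← hYR0]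
        refine tendsto_nhds_unique ((Y.limR 0 (by omega)).1) ?_
        exact Tendsto.congr' (eventuallyEq_of_mem hmemR hyzero).symm tendsto_const_nhds
      have hB0 : B = 0 := by
        rw [← hYR0']
        refine tendsto_nhds_unique ((Y.limR 0 (by omega)).2) ?_
        exact Tendsto.congr' (eventuallyEq_of_mem hmemR hy'zero).symm tendsto_const_nhds
      rcases hAB0 with h | h
      · exact h hA0
      · exact h hB0
    · rw [hYR0, hYLN]
      linear_combination hrow1
    · rw [hYR0, hYR0', hYLN']
      linear_combination hrow2
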